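/- There is an absolute constant C such that every line graph G of a graph H with maximum degree Δ ≥ 2 satisfies χ_CF(G) ≤ C·ln Δ. Equivalently, every graph H with maximum degree Δ ≥ 2 admits a conflict-free edge coloring with at most C·ln Δ colors. -/

import Mathlib

open SimpleGraph

variable {V : Type}

/-- conflict-free coloring predicate on a set of edges -/
def CFon (E : Set (Sym2 V)) {n : ℕ} (f : E → Fin n) : Prop :=
  ∀ e : E, ∃ a : Fin n, ∃! e' : E,
    (∃ v : V, v ∈ (e : Sym2 V) ∧ v ∈ (e' : Sym2 V)) ∧ f e' = a

def CFC (E : Set (Sym2 V)) (n : ℕ) : Prop := ∃ f : E → Fin n, CFon E f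

lemma CFC.union {E₁ E₂ : Set (Sym2 V)} {n₁ n₂ : ℕ} (hd : Disjoint E₁ E₂)
    (h1 : CFC E₁ n₁) (h2 : CFC E₂ n₂) : CFC (E₁ ∪ E₂) (n₁ + n₂) := by
  classical
  obtain ⟨f₁, hf₁⟩ := h1
  obtain ⟨f₂, hf₂⟩ := h2
  have mem2 : ∀ e : ↥(E₁ ∪ E₂), (e : Sym2 V) ∉ E₁ → (e : Sym2 V) ∈ E₂ := by
    rintro ⟨e, he⟩ h; exact he.resolve_left h
  refine ⟨fun e => if h : (e : Sym2 V) ∈ E₁ then Fin.castAdd n₂ (f₁ ⟨e, h⟩)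
      else Fin.natAdd n₁ (f₂ ⟨e, mem2 e h⟩), ?_⟩
  rintro ⟨e, he⟩
  by_cases h : e ∈ E₁
  · obtain ⟨a, ⟨w, ⟨hwsh, hwc⟩, hwu⟩⟩ := hf₁ ⟨e, h⟩
    refine ⟨Fin.castAdd n₂ a, ⟨⟨w.1, Or.inl w.2⟩, ⟨hwsh, ?_⟩, ?_⟩⟩
    · simp only [dif_pos w.2]
      exact congrArg _ hwc
    · rintro ⟨e', he'⟩ ⟨hsh, hc⟩
      by_cases h' : e' ∈ E₁
      · simp only [dif_pos h'] at hc
        have heq : f₁ ⟨e', h'⟩ = a := Fin.ext (by simpa using congrArg Fin.val hc)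
        have := hwu ⟨e', h'⟩ ⟨hsh, heq⟩
        exact Subtype.ext (show e' = (w : Sym2 V) from congrArg Subtype.val this)
      · simp only [dif_neg h'] at hc
        exact absurd (congrArg Fin.val hc) (by
          simp [Fin.natAdd, Fin.castAdd, Fin.castLE]
          omega)
  · have h2' : e ∈ E₂ := mem2 ⟨e, he⟩ h
    obtain ⟨a, ⟨w, ⟨hwsh, hwc⟩, hwu⟩⟩ := hf₂ ⟨e, h2'⟩
    have hw1 : (w : Sym2 V) ∉ E₁ := fun hw => hd.ne_of_mem hw w.2 rfl
    refine ⟨Fin.natAdd n₁ a, ⟨⟨w.1, Or.inr w.2⟩, ⟨hwsh, ?_⟩, ?_⟩⟩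
    · simp only [dif_neg hw1]
      exact congrArg _ (by
        have : (⟨(w : Sym2 V), mem2 ⟨w.1, Or.inr w.2⟩ hw1⟩ : E₂) = w := Subtype.ext rfl
        rw [this, hwc])
    · rintro ⟨e', he'⟩ ⟨hsh, hc⟩
      by_cases h' : e' ∈ E₁
      · simp only [dif_pos h'] at hc
        exact absurd (congrArg Fin.val hc) (by
          simp [Fin.natAdd, Fin.castAdd, Fin.castLE]
          omega)
      · simp only [dif_neg h'] at hc
        have heq : f₂ ⟨e', mem2 ⟨e', he'⟩ h'⟩ = a := Fin.ext (by
          have := congrArg Fin.val hc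
          simp only [show ∀ (k:ℕ) (x : Fin n₂), (Fin.natAdd k x).val = k + x.val from fun _ _ => rfl] at this
          omega)
        have := hwu ⟨e', mem2 ⟨e', he'⟩ h'⟩ ⟨hsh, heq⟩
        exact Subtype.ext (show e' = (w : Sym2 V) from congrArg Subtype.val this)

/-- a matching (edges pairwise not sharing vertices) is CF-colorable with one color -/
lemma CFC_matching [Fintype V] (G : SimpleGraph V) [DecidableRel G.Adj]
    (hdeg : ∀ v, G.degree v ≤ 1) : CFC G.edgeSet 1 := by
  classical
  refine ⟨fun _ => 0, fun e => ⟨0, e, ⟨?_, rfl⟩, ?_⟩⟩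
  · obtain ⟨e, he⟩ := e
    induction e with
    | _ x y => exact ⟨x, Sym2.mem_mk_left x y, Sym2.mem_mk_left x y⟩
  · rintro ⟨e', he'⟩ ⟨⟨v, hv, hv'⟩, -⟩
    refine Subtype.ext ?_
    have h1 : e' ∈ G.incidenceFinset v := by
      rw [mem_incidenceFinset]; exact ⟨he', hv'⟩
    have h2 : (e : Sym2 V) ∈ G.incidenceFinset v := by
      rw [mem_incidenceFinset]; exact ⟨e.2, hv⟩
    have := G.card_incidenceFinset_eq_degree v
    have hle : (G.incidenceFinset v).card ≤ 1 := by rw [this]; exact hdeg v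
    exact Finset.card_le_one.mp hle _ h1 _ h2

section Bip
variable (F : SimpleGraph V)

noncomputable def rt (v : V) : V := (F.connectedComponentMk v).out

lemma rt_reach (v : V) : F.Reachable (rt F v) v :=
  ConnectedComponent.exact (Quot.out_eq _)

lemma rt_congr {u v : V} (h : F.Reachable u v) : rt F u = rt F v := by
  unfold rt; rw [ConnectedComponent.sound h]

noncomputable def dd (v : V) : ℕ := F.dist (rt F v) v

lemma dd_def (v : V) : dd F v = F.dist (rt F v) v := rfl

lemma dd_zero_iff (v : V) : dd F v = 0 ↔ rt F v = v :=
  (rt_reach F v).dist_eq_zero_iff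

lemma rt_idem (v : V) : rt F (rt F v) = rt F v := by
  rw [rt_congr F (rt_reach F v)]

lemma rt_adj {u v : V} (h : F.Adj u v) : rt F u = rt F v := rt_congr F h.reachable

lemma dd_le_adj {u v : V} (h : F.Adj u v) : dd F v ≤ dd F u + 1 := by
  obtain ⟨p, hp⟩ := (rt_reach F u).exists_walk_length_eq_dist
  have : F.dist (rt F u) v ≤ dd F u + 1 := by
    simpa [Walk.length_concat, hp, dd_def] using dist_le (p.concat h)
  rw [dd_def, ← rt_adj F h]
  exact this

lemma walk_last {x y : V} (p : F.Walk x y) (hl : 1 ≤ p.length) :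
    ∃ (w : V) (q : F.Walk x w), F.Adj w y ∧ q.length + 1 = p.length := by
  induction p with
  | nil => simp at hl
  | @cons a b c h q ih =>
    rcases Nat.eq_zero_or_pos q.length with h0 | h1
    · have hbc : b = c := q.eq_of_length_eq_zero h0
      subst hbc
      exact ⟨a, Walk.nil, h, by simp [h0]⟩
    · obtain ⟨w, q', hadj, hlen⟩ := ih h1
      exact ⟨w, Walk.cons h q', hadj, by simp [Walk.length_cons]; omega⟩

lemma ex_par {v : V} (h1 : 1 ≤ dd F v) : ∃ u, F.Adj u v ∧ dd F u + 1 = dd F v := by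
  obtain ⟨p, hp⟩ := (rt_reach F v).exists_walk_length_eq_dist
  rw [← dd_def] at hp
  obtain ⟨w, q, hadj, hlen⟩ := walk_last F p (by omega)
  refine ⟨w, hadj, ?_⟩
  have hwle : dd F w ≤ dd F v - 1 := by
    have hr : rt F w = rt F v := by
      rw [← rt_congr F q.reachable, rt_idem]
    have hq : F.dist (rt F v) w ≤ q.length := dist_le _
    rw [dd_def, hr]
    omega
  have := dd_le_adj F hadj
  omega

open Classical in
noncomputable def pr (v : V) : V :=
  if h : ∃ u, F.Adj u v ∧ dd F u + 1 = dd F v then h.choose else v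

lemma pr_spec {v : V} (h1 : 1 ≤ dd F v) :
    F.Adj (pr F v) v ∧ dd F (pr F v) + 1 = dd F v := by
  have h := ex_par F h1
  rw [pr, dif_pos h]
  exact h.choose_spec

open Classical in
noncomputable def ws (v : V) : V :=
  if h : ∃ w, F.Adj v w then h.choose else v

lemma ws_spec {v : V} (h : ∃ w, F.Adj v w) : F.Adj v (ws F v) := by
  rw [ws, dif_pos h]; exact h.choose_spec

lemma walk_parity {S : Set V} (hb : ∀ u w, F.Adj u w → (u ∈ S ↔ w ∉ S))
    {x y : V} (p : F.Walk x y) : ((x ∈ S) ↔ (y ∈ S)) ↔ Even p.length := by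
  induction p with
  | nil => simp
  | cons h q ih =>
    have := hb _ _ h
    rw [Walk.length_cons, Nat.even_add_one, ← ih]
    tauto

lemma dd_adj {S : Set V} (hb : ∀ u w, F.Adj u w → (u ∈ S ↔ w ∉ S))
    {u v : V} (h : F.Adj u v) : dd F v = dd F u + 1 ∨ dd F u = dd F v + 1 := by
  have h1 := dd_le_adj F h
  have h2 := dd_le_adj F h.symm
  have hpar : dd F u % 2 ≠ dd F v % 2 := by
    obtain ⟨p, hp⟩ := (rt_reach F u).exists_walk_length_eq_dist
    obtain ⟨q, hq⟩ := (rt_reach F v).exists_walk_length_eq_dist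
    rw [← dd_def] at hp hq
    have hu := walk_parity F hb p
    have hv := walk_parity F hb q
    rw [hp] at hu
    rw [hq, ← rt_adj F h] at hv
    have huv := hb _ _ h
    rw [Nat.even_iff] at hu hv
    intro hcon
    rw [hcon] at hu
    tauto
  omega

/-- the special edge predicate: the chosen edge at the root of a component -/
def SpecE (e : Sym2 V) : Prop := ∃ r : V, rt F r = r ∧ e = s(r, ws F r)

/-- parent edges -/
def ParE (e : Sym2 V) : Prop := ∃ x : V, 1 ≤ dd F x ∧ e = s(x, pr F x)

lemma ParE_unique {e : Sym2 V} {x x' : V}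
    (hx : 1 ≤ dd F x ∧ e = s(x, pr F x)) (hx' : 1 ≤ dd F x' ∧ e = s(x', pr F x')) :
    x = x' := by
  obtain ⟨h1, he⟩ := hx
  obtain ⟨h1', he'⟩ := hx'
  rw [he] at he'
  rw [Sym2.eq_iff] at he'
  rcases he' with ⟨h, -⟩ | ⟨ha, hb⟩
  · exact h
  · have p1 := (pr_spec F h1).2
    have p2 := (pr_spec F h1').2
    rw [← ha] at p2
    rw [hb] at p1
    omega

open Classical in
noncomputable def col (e : Sym2 V) : Fin 5 :=
  if SpecE F e then 4
  else if h : ParE F e then ⟨(dd F h.choose - 1) % 3, by omega⟩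
  else 3

lemma col_spec {e : Sym2 V} (h : SpecE F e) : col F e = 4 := by
  rw [col, if_pos h]

lemma col_par {x : V} (h1 : 1 ≤ dd F x) (hs : ¬ SpecE F s(x, pr F x)) :
    col F s(x, pr F x) = ⟨(dd F x - 1) % 3, by omega⟩ := by
  have hp : ParE F s(x, pr F x) := ⟨x, h1, rfl⟩
  rw [col, if_neg hs, dif_pos hp]
  exact Fin.ext (congrArg (fun y => (dd F y - 1) % 3)
    (ParE_unique F (Exists.choose_spec hp) ⟨h1, rfl⟩))

lemma col_cases (e : Sym2 V) :
    col F e = 4 ∨ col F e = 3 ∨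
      ∃ x : V, 1 ≤ dd F x ∧ e = s(x, pr F x) ∧ col F e = ⟨(dd F x - 1) % 3, by omega⟩ := by
  by_cases hs : SpecE F e
  · exact Or.inl (col_spec F hs)
  · by_cases hp : ParE F e
    · refine Or.inr (Or.inr ⟨hp.choose, hp.choose_spec.1, hp.choose_spec.2, ?_⟩)
      rw [col, if_neg hs, dif_pos hp]
    · refine Or.inr (Or.inl ?_)
      rw [col, if_neg hs, dif_neg hp]

end Bip

section Core
variable (F : SimpleGraph V)

lemma col_four {e : Sym2 V} (h : col F e = 4) : SpecE F e := by
  by_cases hs : SpecE F e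
  · exact hs
  · exfalso
    by_cases hp : ParE F e
    · rw [col, if_neg hs, dif_pos hp] at h
      have := congrArg Fin.val h
      simp at this
      omega
    · rw [col, if_neg hs, dif_neg hp] at h
      exact absurd h (by decide)

lemma specE_canon {ε : Sym2 V} (hε : ε ∈ F.edgeSet) (hsp : SpecE F ε) {w : V} (hw : w ∈ ε) :
    ε = s(rt F w, ws F (rt F w)) := by
  obtain ⟨r, hr, rfl⟩ := hsp
  have hadj : F.Adj r (ws F r) := hε
  have hrw : rt F w = r := by
    rcases Sym2.mem_iff.mp hw with h | h
    · rw [h, hr]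
    · rw [h, ← rt_adj F hadj, hr]
  rw [hrw]

lemma core {S : Set V} (hb : ∀ u w, F.Adj u w → (u ∈ S ↔ w ∉ S))
    {u v : V} (huv : F.Adj u v) (hdv : dd F v = dd F u + 1) :
    ∃ a : Fin 5, ∃! e' : F.edgeSet,
      (∃ w : V, w ∈ (s(u, v) : Sym2 V) ∧ w ∈ (e' : Sym2 V)) ∧ col F (e' : Sym2 V) = a := by
  have hcomp : ∀ w : V, w ∈ (s(u, v) : Sym2 V) → rt F w = rt F u := by
    intro w hw
    rcases Sym2.mem_iff.mp hw with h | h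
    · rw [h]
    · rw [h, ← rt_adj F huv]
  -- generic uniqueness for color 4
  have four_case : ∀ e₀ : F.edgeSet, (e₀ : Sym2 V) = s(rt F u, ws F (rt F u)) →
      (∃ w : V, w ∈ (s(u, v) : Sym2 V) ∧ w ∈ (e₀ : Sym2 V)) → col F (e₀ : Sym2 V) = 4 →
      ∃ a : Fin 5, ∃! e' : F.edgeSet,
        (∃ w : V, w ∈ (s(u, v) : Sym2 V) ∧ w ∈ (e' : Sym2 V)) ∧ col F (e' : Sym2 V) = a := by
    rintro e₀ hcanon hsh hcol
    refine ⟨4, e₀, ⟨hsh, hcol⟩, ?_⟩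
    rintro ⟨ε, hε⟩ ⟨⟨w, hw1, hw2⟩, hc⟩
    have hsp := col_four F hc
    have := specE_canon F hε hsp hw2
    rw [hcomp w hw1] at this
    exact Subtype.ext (this.trans hcanon.symm)
  by_cases h0 : dd F u = 0
  · have hru : rt F u = u := (dd_zero_iff F u).mp h0
    have hadj : F.Adj u (ws F u) := ws_spec F ⟨v, huv⟩
    refine four_case ⟨s(u, ws F u), hadj⟩ ?_ ⟨u, ?_, ?_⟩ ?_
    · rw [hru]
    · exact Sym2.mem_mk_left u v
    · exact Sym2.mem_mk_left u (ws F u)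
    · exact col_spec F ⟨u, hru, rfl⟩
  · have h1 : 1 ≤ dd F u := by omega
    have hpr := pr_spec F h1
    have he₀ : F.Adj u (pr F u) := hpr.1.symm
    by_cases hs : SpecE F s(u, pr F u)
    · refine four_case ⟨s(u, pr F u), he₀⟩ ?_ ⟨u, ?_, ?_⟩ ?_
      · exact specE_canon F he₀ hs (Sym2.mem_mk_left u (pr F u))
      · exact Sym2.mem_mk_left u v
      · exact Sym2.mem_mk_left u (pr F u)
      · exact col_spec F hs
    · refine ⟨⟨(dd F u - 1) % 3, by omega⟩, ⟨s(u, pr F u), he₀⟩,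
        ⟨⟨u, Sym2.mem_mk_left u v, Sym2.mem_mk_left u (pr F u)⟩, col_par F h1 hs⟩, ?_⟩
      rintro ⟨ε, hε⟩ ⟨⟨w, hw1, hw2⟩, hc⟩
      rcases col_cases F ε with h4 | h3 | ⟨x, hx1, hxe, hxc⟩
      · rw [h4] at hc
        simp [Fin.ext_iff] at hc
        omega
      · rw [h3] at hc
        simp [Fin.ext_iff] at hc
        omega
      · rw [hxc] at hc
        have hmod : (dd F x - 1) % 3 = (dd F u - 1) % 3 := congrArg Fin.val hc
        have hprx := pr_spec F hx1
        subst hxe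
        rcases Sym2.mem_iff.mp hw1 with hwu | hwv
        · rcases Sym2.mem_iff.mp hw2 with hwx | hwp
          · -- u = x
            rw [hwu] at hwx
            subst hwx
            exact Subtype.ext rfl
          · exfalso
            rw [hwu] at hwp
            rw [← hwp] at hprx
            omega
        · rcases Sym2.mem_iff.mp hw2 with hwx | hwp
          · exfalso
            rw [hwv] at hwx
            rw [← hwx] at hx1 hmod
            omega
          · exfalso
            rw [hwv] at hwp
            rw [← hwp] at hprx
            omega

end Core

lemma bip_CFC (F : SimpleGraph V) {S : Set V}
    (hb : ∀ u w, F.Adj u w → (u ∈ S ↔ w ∉ S)) : CFC F.edgeSet 5 := by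
  refine ⟨fun e => col F (e : Sym2 V), ?_⟩
  rintro ⟨e, he⟩
  induction e with
  | _ x y =>
    have hadj : F.Adj x y := he
    rcases dd_adj F hb hadj with h | h
    · exact core F hb hadj h
    · have hres := core F hb hadj.symm h
      have hswap : (s(y, x) : Sym2 V) = s(x, y) := Sym2.eq_swap
      rw [hswap] at hres
      exact hres

section Cut
open Finset

variable [Fintype V] [DecidableEq V] (G : SimpleGraph V) [DecidableRel G.Adj]

def cutF (S : Finset V) : ℕ := ∑ v ∈ S, ((G.neighborFinset v) \ S).card

lemma cut_flip {S : Finset V} {v : V} (hv : v ∉ S) :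
    cutF G (insert v S) + ((G.neighborFinset v) ∩ S).card
      = cutF G S + ((G.neighborFinset v) \ S).card := by
  have memN : ∀ a b : V, b ∈ G.neighborFinset a ↔ G.Adj a b := by
    intro a b; simp [SimpleGraph.mem_neighborFinset]
  have hNv : ∀ u : V, u ∈ G.neighborFinset u → False := by
    intro u hu; exact G.irrefl ((memN u u).mp hu)
  have h1 : cutF G (insert v S)
      = ((G.neighborFinset v) \ S).card + ∑ u ∈ S, ((G.neighborFinset u \ S).erase v).card := by
    rw [cutF, Finset.sum_insert hv]
    congr 1
    · congr 1
      ext x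
      simp only [mem_sdiff, mem_insert, not_or]
      constructor
      · rintro ⟨h, -, h2⟩; exact ⟨h, h2⟩
      · rintro ⟨h, h2⟩
        refine ⟨h, ?_, h2⟩
        rintro rfl
        exact hNv _ h
    · apply Finset.sum_congr rfl
      intro u hu
      congr 1
      ext x
      simp only [mem_sdiff, mem_insert, not_or, mem_erase]
      tauto
  have h2 : ∀ u ∈ S, ((G.neighborFinset u \ S).erase v).card
      + (if u ∈ G.neighborFinset v then 1 else 0) = (G.neighborFinset u \ S).card := by
    intro u hu
    by_cases hm : u ∈ G.neighborFinset v
    · have hv' : v ∈ G.neighborFinset u \ S := by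
        rw [mem_sdiff, memN]
        exact ⟨((memN v u).mp hm).symm, hv⟩
      rw [if_pos hm, Finset.card_erase_add_one hv']
    · have hv' : v ∉ G.neighborFinset u \ S := by
        rw [mem_sdiff, memN]
        intro hcon
        exact hm ((memN v u).mpr hcon.1.symm)
      rw [if_neg hm, Finset.erase_eq_of_notMem hv', add_zero]
  have h3 : ∑ u ∈ S, ((G.neighborFinset u \ S).erase v).card
      + ((G.neighborFinset v) ∩ S).card = cutF G S := by
    rw [cutF, ← Finset.sum_congr rfl h2, Finset.sum_add_distrib]
    congr 1
    rw [Finset.sum_ite_mem]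
    simp [Finset.inter_comm]
  omega

lemma exists_cut : ∃ S : Finset V, ∀ v : V,
    2 * ((G.neighborFinset v).filter (fun w => ((w ∈ S) ↔ (v ∈ S)))).card ≤ G.degree v := by
  classical
  obtain ⟨S, -, hmax⟩ := Finset.exists_max_image Finset.univ (cutF G) ⟨∅, Finset.mem_univ ∅⟩
  refine ⟨S, fun v => ?_⟩
  have hsplit : ((G.neighborFinset v) ∩ S).card + ((G.neighborFinset v) \ S).card
      = G.degree v := by
    rw [Finset.card_inter_add_card_sdiff, G.card_neighborFinset_eq_degree]
  by_cases hv : v ∈ S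
  · have hfle : ((G.neighborFinset v).filter (fun w => ((w ∈ S) ↔ (v ∈ S)))).card
        = ((G.neighborFinset v) ∩ S).card := by
      congr 1
      ext x
      simp [hv, Finset.mem_filter, Finset.mem_inter]
    have hv' : v ∉ S.erase v := Finset.notMem_erase v S
    have hflip := cut_flip G hv'
    rw [Finset.insert_erase hv] at hflip
    have hle : cutF G (S.erase v) ≤ cutF G S := hmax _ (Finset.mem_univ _)
    have e1 : (G.neighborFinset v) ∩ (S.erase v) = (G.neighborFinset v) ∩ S := by
      ext x
      simp only [Finset.mem_inter, Finset.mem_erase]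
      constructor
      · rintro ⟨h, -, h2⟩; exact ⟨h, h2⟩
      · rintro ⟨h, h2⟩
        refine ⟨h, ?_, h2⟩
        rintro rfl
        simp at h
    have e2 : (G.neighborFinset v) \ (S.erase v) = (G.neighborFinset v) \ S := by
      ext x
      simp only [Finset.mem_sdiff, Finset.mem_erase]
      constructor
      · rintro ⟨h, h2⟩
        refine ⟨h, fun hx => h2 ⟨?_, hx⟩⟩
        rintro rfl
        simp at h
      · rintro ⟨h, h2⟩
        exact ⟨h, fun hx => h2 hx.2⟩
    rw [e1, e2] at hflip
    omega
  · have hfle : ((G.neighborFinset v).filter (fun w => ((w ∈ S) ↔ (v ∈ S)))).card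
        = ((G.neighborFinset v) \ S).card := by
      congr 1
      ext x
      simp [hv, Finset.mem_filter, Finset.mem_sdiff]
    have hflip := cut_flip G hv
    have hle : cutF G (insert v S) ≤ cutF G S := hmax _ (Finset.mem_univ _)
    omega

end Cut

def nColors : ℕ → ℕ
  | 0 => 1
  | 1 => 1
  | (D+2) => 5 + nColors ((D+2)/2)

lemma nColors_step {D : ℕ} (h : 2 ≤ D) : nColors D = 5 + nColors (D/2) := by
  obtain ⟨E, rfl⟩ : ∃ E, D = E + 2 := ⟨D - 2, by omega⟩
  simp [nColors]

lemma nColors_base {D : ℕ} (h : D ≤ 1) : nColors D = 1 := by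
  match D, h with
  | 0, _ => simp [nColors]
  | 1, _ => simp [nColors]

lemma nColors_le (D : ℕ) (h : 1 ≤ D) : nColors D ≤ 5 * Nat.log 2 D + 1 := by
  induction D using Nat.strong_induction_on with
  | _ D ih =>
    by_cases hD : D ≤ 1
    · rw [nColors_base hD]; omega
    · have h2 : 2 ≤ D := by omega
      rw [nColors_step h2]
      have hIH := ih (D/2) (by omega) (by omega)
      have hlog : Nat.log 2 (D/2) = Nat.log 2 D - 1 := Nat.log_div_base 2 D
      have hpos : 1 ≤ Nat.log 2 D := Nat.log_pos (by omega) (by omega)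
      omega

/-- main induction: every graph with degrees at most `D` has a conflict-free
edge coloring with `nColors D` colors -/
lemma mainInd (D : ℕ) : ∀ (V : Type) [Fintype V] (G : SimpleGraph V) [DecidableRel G.Adj],
    (∀ v, G.degree v ≤ D) → CFC G.edgeSet (nColors D) := by
  induction D using Nat.strong_induction_on with
  | _ D ih =>
    intro V _ G _ hdeg
    classical
    by_cases hD : D ≤ 1
    · rw [nColors_base hD]
      exact CFC_matching G (fun v => le_trans (hdeg v) hD)
    · have h2 : 2 ≤ D := by omega
      obtain ⟨S, hS⟩ := exists_cut G
      let G' : SimpleGraph V :=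
        { Adj := fun u w => G.Adj u w ∧ ((u ∈ S) ↔ (w ∈ S))
          symm := ⟨fun u w h => ⟨h.1.symm, h.2.symm⟩⟩
          loopless := ⟨fun u h => G.irrefl h.1⟩ }
      let F : SimpleGraph V :=
        { Adj := fun u w => G.Adj u w ∧ ¬((u ∈ S) ↔ (w ∈ S))
          symm := ⟨fun u w h => ⟨h.1.symm, fun hc => h.2 hc.symm⟩⟩
          loopless := ⟨fun u h => G.irrefl h.1⟩ }
      haveI hdec : DecidableRel G'.Adj := fun u w => instDecidableAnd
      have hdeg' : ∀ v, G'.degree v ≤ D / 2 := by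
        intro v
        have hne : G'.neighborFinset v
            = (G.neighborFinset v).filter (fun w => ((w ∈ S) ↔ (v ∈ S))) := by
          ext w
          simp only [SimpleGraph.mem_neighborFinset, Finset.mem_filter]
          constructor
          · rintro ⟨h1, h2⟩
            exact ⟨h1, h2.symm⟩
          · rintro ⟨h1, h2⟩
            exact ⟨h1, h2.symm⟩
        have := hS v
        have hdv := hdeg v
        rw [SimpleGraph.degree, hne]
        omega
      have hIH : CFC G'.edgeSet (nColors (D/2)) := ih (D/2) (by omega) V G' hdeg'
      have hb : ∀ u w, F.Adj u w → (u ∈ (↑S : Set V) ↔ w ∉ (↑S : Set V)) := by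
        intro u w h
        have := h.2
        simp only [Finset.coe_mem, Set.mem_setOf_eq, Finset.mem_coe]
        tauto
      have hF : CFC F.edgeSet 5 := bip_CFC F hb
      have hdisj : Disjoint F.edgeSet G'.edgeSet := by
        rw [Set.disjoint_left]
        intro e he he'
        induction e with
        | _ x y =>
          have h1 : F.Adj x y := he
          have h2 : G'.Adj x y := he'
          exact h1.2 h2.2
      have hunion := CFC.union hdisj hF hIH
      have hset : G.edgeSet = F.edgeSet ∪ G'.edgeSet := by
        ext e
        induction e with
        | _ x y =>
          show G.Adj x y ↔ F.Adj x y ∨ G'.Adj x y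
          constructor
          · intro h
            by_cases hiff : (x ∈ S) ↔ (y ∈ S)
            · exact Or.inr ⟨h, hiff⟩
            · exact Or.inl ⟨h, hiff⟩
          · rintro (h | h) <;> exact h.1
      rw [nColors_step h2, hset]
      exact hunion

lemma nat_log_le_real {D : ℕ} (h : 1 ≤ D) :
    (Nat.log 2 D : ℝ) * Real.log 2 ≤ Real.log D := by
  have hpow : (2 : ℕ) ^ (Nat.log 2 D) ≤ D := Nat.pow_log_le_self 2 (by omega)
  have hpow' : ((2 : ℝ)) ^ (Nat.log 2 D) ≤ (D : ℝ) := by exact_mod_cast hpow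
  have := Real.log_le_log (by positivity) hpow'
  rwa [Real.log_pow] at this

/-- There is an absolute constant `C` such that every graph `H` with maximum degree
`Δ ≥ 2` admits a conflict-free edge coloring with at most `C·ln Δ` colors; equivalently,
the conflict-free chromatic number of any line graph of maximum degree `Δ` is `O(ln Δ)`. -/
theorem conflict_free_index_log_bound :
    ∃ C : ℝ, 0 < C ∧ ∀ (V : Type) [Fintype V] (H : SimpleGraph V) [DecidableRel H.Adj],
      2 ≤ H.maxDegree →
      ∃ (n : ℕ) (f : H.edgeSet → Fin n),
        (n : ℝ) ≤ C * Real.log H.maxDegree ∧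
        ∀ e : H.edgeSet, ∃ a : Fin n, ∃! e' : H.edgeSet,
          (∃ v : V, v ∈ (e : Sym2 V) ∧ v ∈ (e' : Sym2 V)) ∧ f e' = a := by
  have hlog2 : 0 < Real.log 2 := Real.log_pos (by norm_num)
  refine ⟨6 / Real.log 2, by positivity, ?_⟩
  intro V _ H _ hΔ
  set D := H.maxDegree with hD
  obtain ⟨f, hf⟩ := mainInd D V H (fun v => H.degree_le_maxDegree v)
  refine ⟨nColors D, f, ?_, hf⟩
  -- numeric bound
  have h1 : nColors D ≤ 5 * Nat.log 2 D + 1 := nColors_le D (by omega)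
  have h2 : (Nat.log 2 D : ℝ) * Real.log 2 ≤ Real.log D := nat_log_le_real (by omega)
  have h3 : Real.log 2 ≤ Real.log D := by
    apply Real.log_le_log (by norm_num)
    exact_mod_cast hΔ
  have h4 : (nColors D : ℝ) * Real.log 2 ≤ 6 * Real.log D := by
    have hcast : (nColors D : ℝ) ≤ 5 * (Nat.log 2 D : ℝ) + 1 := by exact_mod_cast h1
    nlinarith [hlog2]
  rw [div_mul_eq_mul_div, le_div_iff₀ hlog2]
  linarith
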